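/- Let G be a discrete group, let H be a complex Hilbert space decomposed as the orthogonal direct sum of subspaces H_g indexed by g ∈ G (via pairwise orthogonal projections P_g with ∑_{g∈G} P_g = I strongly), let K be a complex Hilbert space, let c ≥ 0, and let ξ, η : G → K satisfy ‖ξ(g)‖ ≤ √c and ‖η(g)‖ ≤ √c for all g ∈ G. Suppose φ : G → ℂ satisfies φ(st⁻¹) = ⟨ξ(t), η(s)⟩ for all s, t ∈ G. Then for every bounded operator x on H there exists a unique bounded operator Λ_s(x) on H with P_s Λ_s(x) P_t = φ(st⁻¹) · (P_s x P_t) for all s, t ∈ G, and ‖Λ_s(x)‖ ≤ c · ‖x‖. -/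

import Mathlib

open scoped InnerProductSpace ENNReal

namespace SchurAux

variable {H : Type*} [NormedAddCommGroup H] [InnerProductSpace ℂ H] [CompleteSpace H]

/-- A pairwise orthogonal family with summable squared norms is summable. -/
lemma summable_of_orth {ι : Type*} {u : ι → H}
    (horth : ∀ i j, i ≠ j → ⟪u i, u j⟫_ℂ = 0)
    (hsum : Summable fun i => ‖u i‖ ^ 2) : Summable u := by
  have hOF : OrthogonalFamily ℂ (fun i => ↥(Submodule.span ℂ ({u i} : Set H)))
      (fun i => (Submodule.span ℂ ({u i} : Set H)).subtypeₗᵢ) := by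
    intro i j hij v w
    obtain ⟨a, ha⟩ := Submodule.mem_span_singleton.1 v.2
    obtain ⟨e, he⟩ := Submodule.mem_span_singleton.1 w.2
    show ⟪(v : H), (w : H)⟫_ℂ = 0
    rw [← ha, ← he, inner_smul_left, inner_smul_right, horth i j hij]
    ring
  have hf : ∀ i, u i ∈ Submodule.span ℂ ({u i} : Set H) := fun i =>
    Submodule.mem_span_singleton_self _
  have := (hOF.summable_iff_norm_sq_summable (fun i => ⟨u i, hf i⟩)).2 (by simpa using hsum)
  simpa using this

/-- Parseval-type identity for a pairwise orthogonal summable family. -/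
lemma hasSum_normSq {ι : Type*} {u : ι → H} {S : H}
    (horth : ∀ i j, i ≠ j → ⟪u i, u j⟫_ℂ = 0) (hu : HasSum u S) :
    HasSum (fun i => ‖u i‖ ^ 2) (‖S‖ ^ 2) := by
  classical
  have h2 : ∀ i, ⟪u i, S⟫_ℂ = (‖u i‖ : ℂ) ^ 2 := by
    intro i
    refine (hu.mapL (innerSL ℂ (u i))).unique ?_
    have he : (fun j => ⟪u i, u j⟫_ℂ) = fun j => if j = i then (‖u i‖ : ℂ) ^ 2 else 0 := by
      funext j
      by_cases hj : j = i
      · subst hj; simp [inner_self_eq_norm_sq_to_K]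
      · simp [hj, horth i j fun h => hj h.symm]
    simpa [he] using hasSum_ite_eq i ((‖u i‖ : ℂ) ^ 2)
  have h3 : HasSum (fun i => ⟪S, u i⟫_ℂ) ⟪S, S⟫_ℂ := hu.mapL (innerSL ℂ S)
  have h4 : HasSum (fun i => ⟪u i, S⟫_ℂ) ((‖S‖ : ℂ) ^ 2) := by
    have := h3.star
    simpa [RCLike.star_def, inner_conj_symm, inner_self_eq_norm_sq_to_K] using this
  have h5 : HasSum (fun i => ((‖u i‖ : ℂ) ^ 2)) ((‖S‖ : ℂ) ^ 2) := by
    simpa [h2] using h4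
  have h6 := h5.mapL Complex.reCLM
  simpa [← Complex.ofReal_pow] using h6

end SchurAux

open SchurAux

open scoped InnerProductSpace

set_option maxHeartbeats 1000000 in
/-- Existence, uniqueness and norm bound for the Schur multiplier
associated to a function `φ(st⁻¹) = ⟨ξ(t), η(s)⟩` with `‖ξ(g)‖, ‖η(g)‖ ≤ √c`. -/
theorem schur_multiplier_of_inner_product_representation
    (G : Type*) [Group G]
    (H : Type*) [NormedAddCommGroup H] [InnerProductSpace ℂ H] [CompleteSpace H]
    (K : Type*) [NormedAddCommGroup K] [InnerProductSpace ℂ K] [CompleteSpace K]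
    (P : G → H →L[ℂ] H)
    (hPsa : ∀ g, IsSelfAdjoint (P g))
    (hPidem : ∀ g, (P g).comp (P g) = P g)
    (hPorth : ∀ g h : G, g ≠ h → (P g).comp (P h) = 0)
    (hPsum : ∀ v : H, HasSum (fun g => P g v) v)
    (c : ℝ) (hc : 0 ≤ c)
    (ξ η : G → K)
    (hξ : ∀ g, ‖ξ g‖ ≤ Real.sqrt c) (hη : ∀ g, ‖η g‖ ≤ Real.sqrt c)
    (φ : G → ℂ)
    (hφ : ∀ s t : G, φ (s * t⁻¹) = ⟪ξ t, η s⟫_ℂ)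
    (x : H →L[ℂ] H) :
    ∃ y : H →L[ℂ] H,
      (∀ s t : G, (P s).comp (y.comp (P t)) = φ (s * t⁻¹) • ((P s).comp (x.comp (P t)))) ∧
      ‖y‖ ≤ c * ‖x‖ ∧
      ∀ z : H →L[ℂ] H,
        (∀ s t : G, (P s).comp (z.comp (P t)) = φ (s * t⁻¹) • ((P s).comp (x.comp (P t)))) →
        z = y := by
  classical
  have hgg : ∀ g v, P g (P g v) = P g v := fun g v => by
    have := ContinuousLinearMap.ext_iff.1 (hPidem g) v
    simpa using this
  have hgh : ∀ {g h : G}, g ≠ h → ∀ v, P g (P h v) = 0 := fun {g h} hne v => by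
    have := ContinuousLinearMap.ext_iff.1 (hPorth g h hne) v
    simpa using this
  have hsa : ∀ (g : G) (u w : H), ⟪P g u, w⟫_ℂ = ⟪u, P g w⟫_ℂ := fun g u w => by
    calc ⟪P g u, w⟫_ℂ = ⟪(ContinuousLinearMap.adjoint (P g)) u, w⟫_ℂ := by
          rw [ContinuousLinearMap.isSelfAdjoint_iff'.1 (hPsa g)]
      _ = ⟪u, P g w⟫_ℂ := ContinuousLinearMap.adjoint_inner_left _ _ _
  have hinner : ∀ {g h : G}, g ≠ h → ∀ v w, ⟪P g v, P h w⟫_ℂ = 0 := fun {g h} hne v w => by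
    rw [hsa, hgh hne, inner_zero_right]
  have hnormsq : ∀ v : H, HasSum (fun g => ‖P g v‖ ^ 2) (‖v‖ ^ 2) := fun v =>
    hasSum_normSq (fun g h hne => hinner hne v v) (hPsum v)
  obtain ⟨ιS, b, -⟩ := exists_hilbertBasis ℂ K
  haveI : Fact ((1 : ℝ≥0∞) ≤ 2) := ⟨by norm_num⟩
  have htwo : ((2 : ℝ≥0∞)).toReal = (2 : ℝ) := by norm_num
  have hpow : ∀ r : ℝ, r ^ ((2 : ℝ≥0∞)).toReal = r ^ (2 : ℕ) := by
    intro r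
    rw [htwo, show (2 : ℝ) = ((2 : ℕ) : ℝ) by norm_num, Real.rpow_natCast]
  -- squared norms of lp elements
  have hlpsummsq : ∀ f : ↥(lp (fun _ : ιS => H) 2),
      Summable (fun i => ‖(f : ∀ _ : ιS, H) i‖ ^ 2) := by
    intro f
    have := (lp.memℓp f).summable (by norm_num : (0:ℝ) < ((2 : ℝ≥0∞)).toReal)
    simpa [hpow] using this
  have hlpnormsq : ∀ f : ↥(lp (fun _ : ιS => H) 2),
      ‖f‖ ^ 2 = ∑' i, ‖(f : ∀ _ : ιS, H) i‖ ^ 2 := by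
    intro f
    have := lp.norm_rpow_eq_tsum (by norm_num : (0:ℝ) < ((2 : ℝ≥0∞)).toReal) f
    simpa [hpow] using this
  -- Parseval for norms in K
  have hck : ∀ u : K, HasSum (fun i : ιS => ‖⟪u, b i⟫_ℂ‖ ^ 2) (‖u‖ ^ 2) := by
    intro u
    have h1 := b.hasSum_inner_mul_inner u u
    have h2 : HasSum (fun i : ιS => ((‖⟪u, b i⟫_ℂ‖ : ℂ) ^ 2)) ((‖u‖ : ℂ) ^ 2) := by
      have he : (fun i : ιS => ⟪u, b i⟫_ℂ * ⟪b i, u⟫_ℂ)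
          = fun i : ιS => ((‖⟪u, b i⟫_ℂ‖ : ℂ) ^ 2) := by
        funext i
        rw [← inner_conj_symm (b i) u]
        exact RCLike.mul_conj _
      rw [he] at h1
      simpa [inner_self_eq_norm_sq_to_K] using h1
    have := h2.mapL Complex.reCLM
    simpa [← Complex.ofReal_pow] using this
  -- the key embedding construction
  have key : ∀ (ζ : G → K), (∀ g, ‖ζ g‖ ≤ Real.sqrt c) →
      ∃ T : H →L[ℂ] ↥(lp (fun _ : ιS => H) 2), ‖T‖ ≤ Real.sqrt c ∧
        ∀ (t : G) (v : H) (i : ιS), (T (P t v) : ∀ _ : ιS, H) i = ⟪ζ t, b i⟫_ℂ • P t v := by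
    intro ζ hζ
    have hζsq : ∀ g, ‖ζ g‖ ^ 2 ≤ c := by
      intro g
      calc ‖ζ g‖ ^ 2 ≤ Real.sqrt c ^ 2 := pow_le_pow_left₀ (norm_nonneg _) (hζ g) 2
        _ = c := Real.sq_sqrt hc
    have hαb : ∀ (i : ιS) (g : G), ‖⟪ζ g, b i⟫_ℂ‖ ^ 2 ≤ c := by
      intro i g
      have h1 : ‖⟪ζ g, b i⟫_ℂ‖ ≤ ‖ζ g‖ := by
        calc ‖⟪ζ g, b i⟫_ℂ‖ ≤ ‖ζ g‖ * ‖b i‖ := norm_inner_le_norm _ _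
          _ = ‖ζ g‖ := by rw [b.orthonormal.1 i]; ring
      calc ‖⟪ζ g, b i⟫_ℂ‖ ^ 2 ≤ ‖ζ g‖ ^ 2 := pow_le_pow_left₀ (norm_nonneg _) h1 2
        _ ≤ c := hζsq g
    have hsummand : ∀ (v : H) (i : ιS), Summable (fun g => ⟪ζ g, b i⟫_ℂ • P g v) := by
      intro v i
      apply summable_of_orth
      · intro g h hne
        rw [inner_smul_left, inner_smul_right, hinner hne]
        ring
      · apply Summable.of_nonneg_of_le (fun g => by positivity)
          (fun g => ?_) (((hnormsq v).summable).mul_left c)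
        rw [norm_smul, mul_pow]
        exact mul_le_mul_of_nonneg_right (hαb i g) (by positivity)
    set Tv : H → ιS → H := fun v i => ∑' g, ⟪ζ g, b i⟫_ℂ • P g v with hTvdef
    have hTvsum : ∀ v i, HasSum (fun g => ⟪ζ g, b i⟫_ℂ • P g v) (Tv v i) := fun v i =>
      (hsummand v i).hasSum
    have hTvnorm : ∀ v i,
        HasSum (fun g => ‖⟪ζ g, b i⟫_ℂ‖ ^ 2 * ‖P g v‖ ^ 2) (‖Tv v i‖ ^ 2) := by
      intro v i
      have := hasSum_normSq (u := fun g => ⟪ζ g, b i⟫_ℂ • P g v)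
        (fun g h hne => by rw [inner_smul_left, inner_smul_right, hinner hne]; ring)
        (hTvsum v i)
      simpa [norm_smul, mul_pow] using this
    have hckP : ∀ (v : H) (t : G),
        HasSum (fun i : ιS => ‖⟪ζ t, b i⟫_ℂ‖ ^ 2 * ‖P t v‖ ^ 2) (‖ζ t‖ ^ 2 * ‖P t v‖ ^ 2) :=
      fun v t => (hck (ζ t)).mul_right (‖P t v‖ ^ 2)
    have hmaj : ∀ v : H, Summable (fun t : G => ‖ζ t‖ ^ 2 * ‖P t v‖ ^ 2) := by
      intro v
      apply Summable.of_nonneg_of_le (fun t => by positivity) (fun t => ?_)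
        (((hnormsq v).summable).mul_left c)
      exact mul_le_mul_of_nonneg_right (hζsq t) (by positivity)
    have hFq : ∀ v : H,
        Summable (fun p : G × ιS => ‖⟪ζ p.1, b p.2⟫_ℂ‖ ^ 2 * ‖P p.1 v‖ ^ 2) := by
      intro v
      rw [summable_prod_of_nonneg (fun p => by positivity)]
      constructor
      · intro t
        exact (hckP v t).summable
      · apply Summable.congr (hmaj v)
        intro t
        exact ((hckP v t).tsum_eq).symm
    have hFp : ∀ v : H,
        Summable (fun p : ιS × G => ‖⟪ζ p.2, b p.1⟫_ℂ‖ ^ 2 * ‖P p.2 v‖ ^ 2) := by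
      intro v
      exact ((Equiv.prodComm ιS G).summable_iff
        (f := fun p : G × ιS => ‖⟪ζ p.1, b p.2⟫_ℂ‖ ^ 2 * ‖P p.1 v‖ ^ 2)).2 (hFq v)
    have hTvsummable : ∀ v : H, Summable (fun i => ‖Tv v i‖ ^ 2) := by
      intro v
      have h1 := (summable_prod_of_nonneg
        (f := fun p : ιS × G => ‖⟪ζ p.2, b p.1⟫_ℂ‖ ^ 2 * ‖P p.2 v‖ ^ 2)
        (fun p => by positivity)).1 (hFp v)
      apply Summable.congr h1.2
      intro i
      exact (hTvnorm v i).tsum_eq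
    have hmem : ∀ v : H, Memℓp (Tv v) 2 := by
      intro v
      apply memℓp_gen
      simpa [hpow] using hTvsummable v
    have hnorm : ∀ v : H, ∑' i, ‖Tv v i‖ ^ 2 ≤ c * ‖v‖ ^ 2 := by
      intro v
      have e1 : ∑' i, ‖Tv v i‖ ^ 2
          = ∑' (i : ιS), ∑' (t : G), ‖⟪ζ t, b i⟫_ℂ‖ ^ 2 * ‖P t v‖ ^ 2 := by
        congr 1; funext i; exact ((hTvnorm v i).tsum_eq).symm
      have hFp1 := (summable_prod_of_nonneg
        (f := fun p : ιS × G => ‖⟪ζ p.2, b p.1⟫_ℂ‖ ^ 2 * ‖P p.2 v‖ ^ 2)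
        (fun p => by positivity)).1 (hFp v)
      have e2 : ∑' (i : ιS), ∑' (t : G), ‖⟪ζ t, b i⟫_ℂ‖ ^ 2 * ‖P t v‖ ^ 2
          = ∑' p : ιS × G, ‖⟪ζ p.2, b p.1⟫_ℂ‖ ^ 2 * ‖P p.2 v‖ ^ 2 :=
        (Summable.tsum_prod' (hFp v) hFp1.1).symm
      have e3 : ∑' p : ιS × G, ‖⟪ζ p.2, b p.1⟫_ℂ‖ ^ 2 * ‖P p.2 v‖ ^ 2
          = ∑' p : G × ιS, ‖⟪ζ p.1, b p.2⟫_ℂ‖ ^ 2 * ‖P p.1 v‖ ^ 2 :=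
        (Equiv.prodComm ιS G).tsum_eq
          (fun p : G × ιS => ‖⟪ζ p.1, b p.2⟫_ℂ‖ ^ 2 * ‖P p.1 v‖ ^ 2)
      have e4 : ∑' p : G × ιS, ‖⟪ζ p.1, b p.2⟫_ℂ‖ ^ 2 * ‖P p.1 v‖ ^ 2
          = ∑' (t : G), ∑' (i : ιS), ‖⟪ζ t, b i⟫_ℂ‖ ^ 2 * ‖P t v‖ ^ 2 :=
        Summable.tsum_prod' (hFq v) (fun t => (hckP v t).summable)
      rw [e1, e2, e3, e4]
      have hsumlhs : Summable (fun t : G => ∑' (i : ιS), ‖⟪ζ t, b i⟫_ℂ‖ ^ 2 * ‖P t v‖ ^ 2) := by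
        apply Summable.congr (hmaj v)
        intro t
        exact ((hckP v t).tsum_eq).symm
      calc ∑' (t : G), ∑' (i : ιS), ‖⟪ζ t, b i⟫_ℂ‖ ^ 2 * ‖P t v‖ ^ 2
          ≤ ∑' (t : G), c * ‖P t v‖ ^ 2 := by
            apply Summable.tsum_le_tsum _ hsumlhs (((hnormsq v).summable).mul_left c)
            intro t
            rw [(hckP v t).tsum_eq]
            exact mul_le_mul_of_nonneg_right (hζsq t) (by positivity)
        _ = c * ∑' (t : G), ‖P t v‖ ^ 2 := tsum_mul_left
        _ = c * ‖v‖ ^ 2 := by rw [(hnormsq v).tsum_eq]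
    set T₀ : H →ₗ[ℂ] ↥(lp (fun _ : ιS => H) 2) :=
      { toFun := fun v => ⟨Tv v, hmem v⟩
        map_add' := by
          intro v w
          apply Subtype.ext
          funext i
          have h1 : HasSum (fun g => ⟪ζ g, b i⟫_ℂ • P g (v + w)) (Tv v i + Tv w i) := by
            have := (hTvsum v i).add (hTvsum w i)
            simpa [map_add, smul_add] using this
          show Tv (v + w) i = Tv v i + Tv w i
          exact h1.tsum_eq
        map_smul' := by
          intro a v
          apply Subtype.ext
          funext i
          have h1 : HasSum (fun g => ⟪ζ g, b i⟫_ℂ • P g (a • v)) (a • Tv v i) := by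
            have := (hTvsum v i).const_smul a
            simpa [map_smul, smul_comm a] using this
          simpa [hTvdef] using h1.tsum_eq } with hT₀
    have hTbound : ∀ v : H, ‖T₀ v‖ ≤ Real.sqrt c * ‖v‖ := by
      intro v
      have h2 : ‖T₀ v‖ ^ 2 = ∑' i, ‖Tv v i‖ ^ 2 := hlpnormsq _
      have h3 : ‖T₀ v‖ ^ 2 ≤ (Real.sqrt c * ‖v‖) ^ 2 := by
        rw [h2, mul_pow, Real.sq_sqrt hc]
        exact hnorm v
      have h4 : (0:ℝ) ≤ Real.sqrt c * ‖v‖ := by positivity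
      nlinarith [norm_nonneg (T₀ v)]
    refine ⟨T₀.mkContinuous (Real.sqrt c) hTbound,
      T₀.mkContinuous_norm_le (Real.sqrt_nonneg c) hTbound, ?_⟩
    intro t v i
    show Tv (P t v) i = ⟪ζ t, b i⟫_ℂ • P t v
    have hz : ∀ g, g ≠ t → ⟪ζ g, b i⟫_ℂ • P g (P t v) = 0 := fun g hg => by
      rw [hgh hg, smul_zero]
    have h5 : HasSum (fun g => ⟪ζ g, b i⟫_ℂ • P g (P t v)) (⟪ζ t, b i⟫_ℂ • P t (P t v)) :=
      hasSum_single t hz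
    have h6 := (hTvsum (P t v) i).unique h5
    rw [hgg] at h6
    exact h6
  obtain ⟨A, hAnorm, hAblock⟩ := key ξ hξ
  obtain ⟨B, hBnorm, hBblock⟩ := key η hη
  -- the componentwise operator X
  have hXmem : ∀ u : ↥(lp (fun _ : ιS => H) 2),
      Memℓp (fun i => x ((u : ∀ _ : ιS, H) i)) 2 := by
    intro u
    apply memℓp_gen
    have hs : Summable (fun i => ‖x‖ ^ 2 * ‖(u : ∀ _ : ιS, H) i‖ ^ 2) :=
      (hlpsummsq u).mul_left _
    have : Summable (fun i => ‖x ((u : ∀ _ : ιS, H) i)‖ ^ 2) := by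
      apply Summable.of_nonneg_of_le (fun i => by positivity) (fun i => ?_) hs
      rw [← mul_pow]
      exact pow_le_pow_left₀ (norm_nonneg _) (x.le_opNorm _) 2
    simpa [hpow] using this
  set X₀ : ↥(lp (fun _ : ιS => H) 2) →ₗ[ℂ] ↥(lp (fun _ : ιS => H) 2) :=
    { toFun := fun u => ⟨fun i => x ((u : ∀ _ : ιS, H) i), hXmem u⟩
      map_add' := by
        intro u w
        apply Subtype.ext
        funext i
        simp only [lp.coeFn_add]
        show x ((↑u + ↑w : ∀ _ : ιS, H) i) = _
        simp only [Pi.add_apply, map_add]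
      map_smul' := by
        intro a u
        apply Subtype.ext
        funext i
        simp only [lp.coeFn_smul]
        show x ((a • (↑u : ∀ _ : ιS, H)) i) = _
        simp only [Pi.smul_apply, map_smul, RingHom.id_apply] } with hX₀
  have hXbound : ∀ u, ‖X₀ u‖ ≤ ‖x‖ * ‖u‖ := by
    intro u
    have h2 : ‖X₀ u‖ ^ 2 = ∑' i, ‖x ((u : ∀ _ : ιS, H) i)‖ ^ 2 := hlpnormsq _
    have h3 : ‖X₀ u‖ ^ 2 ≤ (‖x‖ * ‖u‖) ^ 2 := by
      rw [h2, mul_pow, hlpnormsq u]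
      calc ∑' i, ‖x ((u : ∀ _ : ιS, H) i)‖ ^ 2
          ≤ ∑' i, ‖x‖ ^ 2 * ‖(u : ∀ _ : ιS, H) i‖ ^ 2 := by
            apply Summable.tsum_le_tsum _ ?_ ((hlpsummsq u).mul_left _)
            · intro i
              rw [← mul_pow]
              exact pow_le_pow_left₀ (norm_nonneg _) (x.le_opNorm _) 2
            · apply Summable.of_nonneg_of_le (fun i => by positivity) (fun i => ?_)
                ((hlpsummsq u).mul_left (‖x‖ ^ 2))
              rw [← mul_pow]
              exact pow_le_pow_left₀ (norm_nonneg _) (x.le_opNorm _) 2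
        _ = ‖x‖ ^ 2 * ∑' i, ‖(u : ∀ _ : ιS, H) i‖ ^ 2 := tsum_mul_left
    have h4 : (0:ℝ) ≤ ‖x‖ * ‖u‖ := by positivity
    nlinarith [norm_nonneg (X₀ u)]
  set X : ↥(lp (fun _ : ιS => H) 2) →L[ℂ] ↥(lp (fun _ : ιS => H) 2) :=
    X₀.mkContinuous ‖x‖ hXbound with hX
  have hXnorm : ‖X‖ ≤ ‖x‖ := X₀.mkContinuous_norm_le (norm_nonneg x) hXbound
  have hXapply : ∀ (u : ↥(lp (fun _ : ιS => H) 2)) (i : ιS),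
      (X u : ∀ _ : ιS, H) i = x ((u : ∀ _ : ιS, H) i) := fun u i => rfl
  -- the Schur multiplier
  set y : H →L[ℂ] H := (ContinuousLinearMap.adjoint B).comp (X.comp A) with hy
  have hynorm : ‖y‖ ≤ c * ‖x‖ := by
    have h1 : ‖y‖ ≤ ‖ContinuousLinearMap.adjoint B‖ * ‖X.comp A‖ :=
      ContinuousLinearMap.opNorm_comp_le _ _
    have h2 : ‖X.comp A‖ ≤ ‖X‖ * ‖A‖ := ContinuousLinearMap.opNorm_comp_le _ _
    have h3 : ‖ContinuousLinearMap.adjoint B‖ = ‖B‖ :=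
      ContinuousLinearMap.adjoint.norm_map B
    calc ‖y‖ ≤ ‖B‖ * (‖X‖ * ‖A‖) := by
          rw [← h3]
          exact h1.trans (mul_le_mul_of_nonneg_left h2 (norm_nonneg _))
      _ ≤ Real.sqrt c * (‖x‖ * Real.sqrt c) := by
          apply mul_le_mul hBnorm _ (by positivity) (Real.sqrt_nonneg c)
          exact mul_le_mul hXnorm hAnorm (ContinuousLinearMap.opNorm_nonneg _)
            (norm_nonneg x)
      _ = Real.sqrt c * Real.sqrt c * ‖x‖ := by ring
      _ = c * ‖x‖ := by rw [Real.mul_self_sqrt hc]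
  have hblock : ∀ s t : G,
      (P s).comp (y.comp (P t)) = φ (s * t⁻¹) • ((P s).comp (x.comp (P t))) := by
    intro s t
    apply ContinuousLinearMap.ext
    intro v
    apply ext_inner_left ℂ
    intro w
    simp only [ContinuousLinearMap.comp_apply, ContinuousLinearMap.smul_apply]
    rw [inner_smul_right, ← hsa s w, ← hsa s w]
    have hterm : ∀ i : ιS, ⟪(B (P s w) : ∀ _ : ιS, H) i, (X (A (P t v)) : ∀ _ : ιS, H) i⟫_ℂ
        = (⟪ξ t, b i⟫_ℂ * ⟪b i, η s⟫_ℂ) * ⟪P s w, x (P t v)⟫_ℂ := by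
      intro i
      rw [hBblock s w i, hXapply, hAblock t v i, map_smul, inner_smul_left,
        inner_smul_right, inner_conj_symm]
      ring
    calc ⟪P s w, y (P t v)⟫_ℂ
        = ⟪B (P s w), X (A (P t v))⟫_ℂ := by
          rw [hy]
          simp only [ContinuousLinearMap.comp_apply]
          exact ContinuousLinearMap.adjoint_inner_right B _ _
      _ = ∑' i, ⟪(B (P s w) : ∀ _ : ιS, H) i, (X (A (P t v)) : ∀ _ : ιS, H) i⟫_ℂ :=
          ((lp.hasSum_inner (𝕜 := ℂ) (B (P s w)) (X (A (P t v)))).tsum_eq).symm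
      _ = (∑' i, ⟪ξ t, b i⟫_ℂ * ⟪b i, η s⟫_ℂ) * ⟪P s w, x (P t v)⟫_ℂ := by
          rw [← tsum_mul_right]
          congr 1; funext i; exact hterm i
      _ = φ (s * t⁻¹) * ⟪P s w, x (P t v)⟫_ℂ := by
          rw [(b.hasSum_inner_mul_inner (ξ t) (η s)).tsum_eq, hφ]
  refine ⟨y, hblock, hynorm, ?_⟩
  intro z hz
  apply ContinuousLinearMap.ext
  intro v
  have hd : ∀ (t : G) (u : H), z (P t u) - y (P t u) = 0 := by
    intro t u
    have h1 : ∀ s : G, P s (z (P t u) - y (P t u)) = 0 := by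
      intro s
      have e1 := ContinuousLinearMap.ext_iff.1 (hz s t) u
      have e2 := ContinuousLinearMap.ext_iff.1 (hblock s t) u
      simp only [ContinuousLinearMap.comp_apply, ContinuousLinearMap.smul_apply] at e1 e2
      rw [map_sub, e1, e2, sub_self]
    have h2 := hPsum (z (P t u) - y (P t u))
    have h3 : HasSum (fun _ : G => (0 : H)) (z (P t u) - y (P t u)) := by
      simpa [h1] using h2
    exact (h3.unique hasSum_zero)
  have h4 := (hPsum v).mapL (z - y)
  have h5 : HasSum (fun _ : G => (0 : H)) ((z - y) v) := by
    have : ∀ t : G, (z - y) (P t v) = 0 := by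
      intro t
      simpa [ContinuousLinearMap.sub_apply] using hd t v
    simpa [this] using h4
  have h6 := h5.unique hasSum_zero
  have h7 : z v - y v = 0 := by simpa [ContinuousLinearMap.sub_apply] using h6
  exact sub_eq_zero.1 h7
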